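/- Good starting vertices exist: for any induced subgraph (S,T) of a bipartite graph with d(S,T) \geq 2\theta, there exists a subset S_\theta \subseteq S such that e(S_\theta, T) \geq e(S,T)/2, and for each v \in S_\theta there is a nonnegative unit vector \psi supported on S \cup T satisfying \psi A \geq \theta \psi (entrywise) and \psi(v) \geq 1/\sqrt{2|S|}. -/

import Mathlib

open Finset

private lemma coeff_zero_of_forall (a b : ℝ) (h : ∀ t : ℝ, 0 ≤ a + t * b) : b = 0 := by
  by_contra hb
  have h1 := h ((-(a + 1)) / b)
  rw [div_mul_cancel₀ _ hb] at h1
  linarith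

private lemma spectral_max {V : Type*} [Fintype V] [DecidableEq V]
    (A : Matrix V V ℝ) (hsym : A.IsSymm) (hnn : ∀ u v, 0 ≤ A u v)
    (W : Finset V) (x₀ : V → ℝ) (hx₀sup : ∀ u ∉ W, x₀ u = 0)
    (hx₀norm : ∑ u, x₀ u ^ 2 = 1) :
    ∃ (φ : V → ℝ) (lam : ℝ),
      (∀ u, 0 ≤ φ u) ∧ (∀ u ∉ W, φ u = 0) ∧ (∑ u, φ u ^ 2 = 1) ∧
      (∑ u ∈ W, ∑ w ∈ W, x₀ u * A u w * x₀ w ≤ lam) ∧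
      (∀ u ∈ W, ∑ w ∈ W, φ w * A w u = lam * φ u) := by
  classical
  set q : (V → ℝ) → ℝ := fun x => ∑ u ∈ W, ∑ w ∈ W, x u * A u w * x w with hqdef
  set K : Set (V → ℝ) := {x | (∑ u, x u ^ 2 = 1) ∧ ∀ u ∉ W, x u = 0} with hKdef
  have hx₀K : x₀ ∈ K := ⟨hx₀norm, hx₀sup⟩
  -- compactness
  have hKclosed : IsClosed K := by
    have h1 : IsClosed {x : V → ℝ | ∑ u, x u ^ 2 = 1} := by
      apply isClosed_eq _ continuous_const
      fun_prop
    have h2 : IsClosed {x : V → ℝ | ∀ u ∉ W, x u = 0} := by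
      have : {x : V → ℝ | ∀ u ∉ W, x u = 0} = ⋂ u ∈ (Wᶜ : Finset V), {x : V → ℝ | x u = 0} := by
        ext x; simp [Finset.mem_compl]
      rw [this]
      exact isClosed_biInter fun u _ => isClosed_eq (continuous_apply u) continuous_const
    exact h1.inter h2
  have hKsub : K ⊆ Metric.closedBall 0 1 := by
    intro x hx
    rw [Metric.mem_closedBall, dist_zero_right]
    rw [pi_norm_le_iff_of_nonneg zero_le_one]
    intro u
    rw [Real.norm_eq_abs, ← Real.sqrt_sq_eq_abs, ← Real.sqrt_one]
    apply Real.sqrt_le_sqrt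
    calc x u ^ 2 ≤ ∑ w, x w ^ 2 :=
          Finset.single_le_sum (fun w _ => sq_nonneg (x w)) (mem_univ u)
      _ = 1 := hx.1
  have hKcomp : IsCompact K := (isCompact_closedBall 0 1).of_isClosed_subset hKclosed hKsub
  have hqcont : Continuous q := by fun_prop
  obtain ⟨x₁, hx₁K, hx₁max⟩ := hKcomp.exists_isMaxOn ⟨x₀, hx₀K⟩ hqcont.continuousOn
  set φ : V → ℝ := fun u => |x₁ u| with hφdef
  have hφnn : ∀ u, 0 ≤ φ u := fun u => abs_nonneg _
  have hφsup : ∀ u ∉ W, φ u = 0 := fun u hu => by simp [hφdef, hx₁K.2 u hu]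
  have hφnorm : ∑ u, φ u ^ 2 = 1 := by simpa [hφdef, sq_abs] using hx₁K.1
  have hφK : φ ∈ K := ⟨hφnorm, hφsup⟩
  have hφge : q x₁ ≤ q φ := by
    apply Finset.sum_le_sum; intro u _
    apply Finset.sum_le_sum; intro w _
    calc x₁ u * A u w * x₁ w ≤ |x₁ u * A u w * x₁ w| := le_abs_self _
      _ = φ u * A u w * φ w := by
          rw [abs_mul, abs_mul, abs_of_nonneg (hnn u w)]
  set lam : ℝ := q φ with hlamdef
  have hmax : ∀ y ∈ K, q y ≤ lam := fun y hy => le_trans (hx₁max hy) hφge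
  -- scaling
  have hscale : ∀ x : V → ℝ, (∀ u ∉ W, x u = 0) → q x ≤ lam * ∑ u, x u ^ 2 := by
    intro x hx
    rcases eq_or_ne (∑ u, x u ^ 2) 0 with hs | hs
    · have hx0 : ∀ u, x u = 0 := by
        intro u
        have h0 := (Finset.sum_eq_zero_iff_of_nonneg (fun w _ => sq_nonneg (x w))).mp hs u (mem_univ u)
        exact (pow_eq_zero_iff two_ne_zero).mp h0
      have : q x = 0 := by simp [hqdef, hx0]
      simp [this, hs]
    · have hspos : 0 < ∑ u, x u ^ 2 :=
        lt_of_le_of_ne (Finset.sum_nonneg fun u _ => sq_nonneg _) (Ne.symm hs)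
      set s := ∑ u, x u ^ 2 with hsdef
      have hr : Real.sqrt s ^ 2 = s := Real.sq_sqrt hspos.le
      have hrpos : 0 < Real.sqrt s := Real.sqrt_pos.mpr hspos
      set y : V → ℝ := fun u => x u / Real.sqrt s with hydef
      have hyK : y ∈ K := by
        constructor
        · simp only [hydef, div_pow]
          rw [← Finset.sum_div, hr, ← hsdef, div_self hs]
        · intro u hu; simp [hydef, hx u hu]
      have h1 := hmax y hyK
      have hqy : q y = q x / s := by
        simp only [hqdef, hydef]
        rw [Finset.sum_div]
        refine Finset.sum_congr rfl fun u _ => ?_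
        rw [Finset.sum_div]
        refine Finset.sum_congr rfl fun w _ => ?_
        rw [← hr]; field_simp; simp only [hr]
      rw [hqy, div_le_iff₀ hspos] at h1
      linarith [h1]
  -- bilinear identity
  have hAsymm : ∀ u w, A u w = A w u := fun u w => (hsym.apply w u)
  have key : ∀ x : V → ℝ, (∀ u ∉ W, x u = 0) →
      lam * (∑ u, x u * φ u) = ∑ u ∈ W, ∑ w ∈ W, x u * A u w * φ w := by
    intro x hx
    set c : ℝ := ∑ u ∈ W, ∑ w ∈ W, x u * A u w * φ w with hcdef
    have hb : ∀ t : ℝ, 0 ≤ (lam * ∑ u, x u ^ 2 - q x) + t * (2 * (lam * (∑ u, x u * φ u) - c)) := by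
      intro t
      have h1 := hscale (fun u => x u + t * φ u) (fun u hu => by simp [hx u hu, hφsup u hu])
      have e1 : ∑ u, (x u + t * φ u) ^ 2
          = ∑ u, x u ^ 2 + 2 * t * (∑ u, x u * φ u) + t ^ 2 := by
        have hterm : ∀ u, (x u + t * φ u) ^ 2
            = x u ^ 2 + (2 * t) * (x u * φ u) + t ^ 2 * φ u ^ 2 := fun u => by ring
        simp only [hterm]
        rw [Finset.sum_add_distrib, Finset.sum_add_distrib, ← Finset.mul_sum, ← Finset.mul_sum,
          hφnorm, mul_one]
      have hswap : ∑ u ∈ W, ∑ w ∈ W, φ u * A u w * x w = c := by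
        rw [hcdef, Finset.sum_comm]
        refine Finset.sum_congr rfl fun u _ => Finset.sum_congr rfl fun w _ => ?_
        rw [hAsymm w u]; ring
      have e2 : q (fun u => x u + t * φ u) = q x + 2 * t * c + t ^ 2 * lam := by
        have hterm : ∀ u w, (x u + t * φ u) * A u w * (x w + t * φ w)
            = x u * A u w * x w + t * (x u * A u w * φ w) + t * (φ u * A u w * x w)
              + t ^ 2 * (φ u * A u w * φ w) := fun u w => by ring
        have hlam' : (∑ u ∈ W, ∑ w ∈ W, φ u * A u w * φ w) = lam := rfl
        simp only [hqdef, hterm]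
        simp only [Finset.sum_add_distrib, ← Finset.mul_sum]
        rw [hswap, ← hcdef, hlam']
        ring
      rw [e2, e1] at h1
      nlinarith [h1]
    have hz := coeff_zero_of_forall _ _ hb
    linarith
  -- eigen equation
  refine ⟨φ, lam, hφnn, hφsup, hφnorm, hmax x₀ hx₀K, ?_⟩
  intro u₀ hu₀
  have hx : ∀ u ∉ W, (fun u => if u = u₀ then (1:ℝ) else 0) u = 0 := by
    intro u hu
    simp only []
    rw [if_neg]; rintro rfl; exact hu hu₀
  have hk := key _ hx
  have hL : (∑ u, (if u = u₀ then (1:ℝ) else 0) * φ u) = φ u₀ := by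
    simp [Finset.sum_ite_eq' Finset.univ u₀ (fun u => φ u)]
  have hR : (∑ u ∈ W, ∑ w ∈ W, (if u = u₀ then (1:ℝ) else 0) * A u w * φ w)
      = ∑ w ∈ W, A u₀ w * φ w := by
    rw [Finset.sum_comm]
    refine Finset.sum_congr rfl fun w _ => ?_
    simp only [ite_mul, one_mul, zero_mul]
    rw [Finset.sum_ite_eq' W u₀ (fun u => A u w * φ w), if_pos hu₀]
  rw [hL, hR] at hk
  have hflip : (∑ w ∈ W, φ w * A w u₀) = ∑ w ∈ W, A u₀ w * φ w :=
    Finset.sum_congr rfl fun w _ => by rw [hAsymm w u₀]; ring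
  rw [hflip]; exact hk.symm

open Finset

set_option maxHeartbeats 2000000 in
/-- Lemma 2 (good starting vertices): if `(S,T)` is an induced subgraph of a bipartite graph
with `d(S,T) ≥ 2θ`, then there is `S_θ ⊆ S` with `e(S_θ,T) ≥ e(S,T)/2` such that every
`v ∈ S_θ` admits a nonnegative unit vector `ψ` supported on `S ∪ T` with `ψA ≥ θψ`
entrywise and `ψ v ≥ 1/√(2|S|)`. -/
theorem good_starting_vertices {V : Type*} [Fintype V] [DecidableEq V]
    (A : Matrix V V ℝ) (hsym : A.IsSymm) (hnn : ∀ u v, 0 ≤ A u v)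
    (L R : Finset V) (hdisj : Disjoint L R) (hunion : L ∪ R = Finset.univ)
    (hbip : ∀ u v, A u v ≠ 0 → (u ∈ L ∧ v ∈ R) ∨ (u ∈ R ∧ v ∈ L))
    (S T : Finset V) (hS : S ⊆ L) (hT : T ⊆ R) (hSne : S.Nonempty) (hTne : T.Nonempty)
    (θ : ℝ) (hθ : 0 < θ)
    (hdense : 2 * θ * (Real.sqrt S.card * Real.sqrt T.card) ≤ ∑ u ∈ S, ∑ v ∈ T, A u v) :
    ∃ Sθ : Finset V, Sθ ⊆ S ∧
      (∑ u ∈ S, ∑ v ∈ T, A u v) / 2 ≤ ∑ u ∈ Sθ, ∑ v ∈ T, A u v ∧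
      ∀ v ∈ Sθ, ∃ ψ : V → ℝ,
        (∀ u, 0 ≤ ψ u) ∧
        Real.sqrt (∑ u, ψ u ^ 2) = 1 ∧
        (∀ u, ψ u ≠ 0 → u ∈ S ∪ T) ∧
        (∀ u, θ * ψ u ≤ Matrix.vecMul ψ A u) ∧
        1 / Real.sqrt (2 * S.card) ≤ ψ v := by
  classical
  have hAsymm : ∀ u w, A u w = A w u := fun u w => hsym.apply w u
  have hLL : ∀ u ∈ L, ∀ w ∈ L, A u w = 0 := by
    intro u hu w hw
    by_contra h
    rcases hbip u w h with ⟨h1, h2⟩ | ⟨h1, h2⟩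
    · exact (Finset.disjoint_left.mp hdisj hw) h2
    · exact (Finset.disjoint_left.mp hdisj hu) h1
  have hRR : ∀ u ∈ R, ∀ w ∈ R, A u w = 0 := by
    intro u hu w hw
    by_contra h
    rcases hbip u w h with ⟨h1, h2⟩ | ⟨h1, h2⟩
    · exact (Finset.disjoint_left.mp hdisj h1) hu
    · exact (Finset.disjoint_left.mp hdisj h2) hw
  set good : V → Prop := fun v => ∃ ψ : V → ℝ,
        (∀ u, 0 ≤ ψ u) ∧
        Real.sqrt (∑ u, ψ u ^ 2) = 1 ∧
        (∀ u, ψ u ≠ 0 → u ∈ S ∪ T) ∧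
        (∀ u, θ * ψ u ≤ Matrix.vecMul ψ A u) ∧
        1 / Real.sqrt (2 * S.card) ≤ ψ v with hgood
  refine ⟨S.filter good, Finset.filter_subset _ _, ?_, fun v hv => (Finset.mem_filter.mp hv).2⟩
  by_contra hlt
  push_neg at hlt
  set S' : Finset V := S.filter (fun v => ¬ good v) with hS'def
  have hsplit : (∑ u ∈ S.filter good, ∑ v ∈ T, A u v) + (∑ u ∈ S', ∑ v ∈ T, A u v)
      = ∑ u ∈ S, ∑ v ∈ T, A u v := Finset.sum_filter_add_sum_filter_not S good _
  have hSpos : (0:ℝ) < S.card := by exact_mod_cast Finset.card_pos.mpr hSne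
  have hTpos : (0:ℝ) < T.card := by exact_mod_cast Finset.card_pos.mpr hTne
  have hsqS : 0 < Real.sqrt S.card := Real.sqrt_pos.mpr hSpos
  have hsqT : 0 < Real.sqrt T.card := Real.sqrt_pos.mpr hTpos
  have heSpos : 0 < ∑ u ∈ S, ∑ v ∈ T, A u v := by
    have := mul_pos (mul_pos (by norm_num : (0:ℝ) < 2) hθ) (mul_pos hsqS hsqT)
    linarith
  have heS' : (∑ u ∈ S, ∑ v ∈ T, A u v) / 2 < ∑ u ∈ S', ∑ v ∈ T, A u v := by linarith
  have hS'sub : S' ⊆ S := Finset.filter_subset _ _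
  have hS'ne : S'.Nonempty := by
    rw [Finset.nonempty_iff_ne_empty]
    intro h
    rw [h, Finset.sum_empty] at heS'
    linarith
  have hS'cpos : (0:ℝ) < S'.card := by exact_mod_cast Finset.card_pos.mpr hS'ne
  have hS'L : S' ⊆ L := hS'sub.trans hS
  have hdST : Disjoint S' T := hdisj.mono hS'L hT
  set W : Finset V := S' ∪ T with hW
  set a : ℝ := Real.sqrt (2 * S'.card) with ha
  set b : ℝ := Real.sqrt (2 * T.card) with hb
  have hapos : 0 < a := Real.sqrt_pos.mpr (by linarith)
  have hbpos : 0 < b := Real.sqrt_pos.mpr (by linarith)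
  set x₀ : V → ℝ := fun u => if u ∈ S' then 1/a else if u ∈ T then 1/b else 0 with hx₀def
  have hx₀sup : ∀ u ∉ W, x₀ u = 0 := by
    intro u hu
    rw [hW, Finset.mem_union] at hu
    push_neg at hu
    simp only [hx₀def]
    rw [if_neg hu.1, if_neg hu.2]
  have hsum1 : ∑ u ∈ S', x₀ u ^ 2 = 1/2 := by
    have hc : ∀ u ∈ S', x₀ u ^ 2 = 1 / (2 * (S'.card:ℝ)) := by
      intro u hu
      simp only [hx₀def]
      rw [if_pos hu, div_pow, one_pow, ha, Real.sq_sqrt (by positivity)]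
    rw [Finset.sum_congr rfl hc, Finset.sum_const, nsmul_eq_mul, mul_one_div,
      div_eq_div_iff (by positivity) (by norm_num : (2:ℝ) ≠ 0)]
    ring
  have hsum2 : ∑ u ∈ T, x₀ u ^ 2 = 1/2 := by
    have hc : ∀ u ∈ T, x₀ u ^ 2 = 1 / (2 * (T.card:ℝ)) := by
      intro u hu
      simp only [hx₀def]
      rw [if_neg (Finset.disjoint_right.mp hdST hu), if_pos hu, div_pow, one_pow, hb,
        Real.sq_sqrt (by positivity)]
    rw [Finset.sum_congr rfl hc, Finset.sum_const, nsmul_eq_mul, mul_one_div,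
      div_eq_div_iff (by positivity) (by norm_num : (2:ℝ) ≠ 0)]
    ring
  have hx₀norm : ∑ u, x₀ u ^ 2 = 1 := by
    rw [← Finset.sum_subset (Finset.subset_univ W)
      (fun u _ hu => by rw [hx₀sup u hu, zero_pow two_ne_zero])]
    rw [hW, Finset.sum_union hdST, hsum1, hsum2]
    norm_num
  obtain ⟨φ, lam, hφnn, hφsup, hφnorm, hlam1, heig⟩ :=
    spectral_max A hsym hnn W x₀ hx₀sup hx₀norm
  -- computing q x₀
  have hSS : ∑ u ∈ S', ∑ w ∈ S', x₀ u * A u w * x₀ w = 0 :=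
    Finset.sum_eq_zero fun u hu => Finset.sum_eq_zero fun w hw => by
      rw [hLL u (hS'L hu) w (hS'L hw)]; ring
  have hTT : ∑ u ∈ T, ∑ w ∈ T, x₀ u * A u w * x₀ w = 0 :=
    Finset.sum_eq_zero fun u hu => Finset.sum_eq_zero fun w hw => by
      rw [hRR u (hT hu) w (hT hw)]; ring
  have hST : ∑ u ∈ S', ∑ w ∈ T, x₀ u * A u w * x₀ w = (∑ u ∈ S', ∑ w ∈ T, A u w) / (a*b) := by
    rw [Finset.sum_div]
    refine Finset.sum_congr rfl fun u hu => ?_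
    rw [Finset.sum_div]
    refine Finset.sum_congr rfl fun w hw => ?_
    have h1 : x₀ u = 1/a := by simp only [hx₀def]; rw [if_pos hu]
    have h2 : x₀ w = 1/b := by
      simp only [hx₀def]; rw [if_neg (Finset.disjoint_right.mp hdST hw), if_pos hw]
    rw [h1, h2, one_div_mul_eq_div, mul_one_div, div_div]
  have hTS : ∑ u ∈ T, ∑ w ∈ S', x₀ u * A u w * x₀ w = (∑ u ∈ S', ∑ w ∈ T, A u w) / (a*b) := by
    rw [Finset.sum_comm, Finset.sum_div]
    refine Finset.sum_congr rfl fun w hw => ?_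
    rw [Finset.sum_div]
    refine Finset.sum_congr rfl fun u hu => ?_
    have h1 : x₀ u = 1/b := by
      simp only [hx₀def]; rw [if_neg (Finset.disjoint_right.mp hdST hu), if_pos hu]
    have h2 : x₀ w = 1/a := by simp only [hx₀def]; rw [if_pos hw]
    rw [h1, h2, hAsymm u w, one_div_mul_eq_div, mul_one_div, div_div, mul_comm b a]
  have hsplit4 : ∀ g : V → V → ℝ, ∑ u ∈ W, ∑ w ∈ W, g u w
      = ((∑ u ∈ S', ∑ w ∈ S', g u w) + ∑ u ∈ S', ∑ w ∈ T, g u w)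
      + ((∑ u ∈ T, ∑ w ∈ S', g u w) + ∑ u ∈ T, ∑ w ∈ T, g u w) := by
    intro g
    rw [hW, Finset.sum_union hdST]
    congr 1
    · exact (Finset.sum_congr rfl fun u _ => Finset.sum_union hdST).trans
        Finset.sum_add_distrib
    · exact (Finset.sum_congr rfl fun u _ => Finset.sum_union hdST).trans
        Finset.sum_add_distrib
  have heq : ∑ u ∈ W, ∑ w ∈ W, x₀ u * A u w * x₀ w
      = 2 * (∑ u ∈ S', ∑ w ∈ T, A u w) / (a * b) := by
    rw [hsplit4, hSS, hTT, hST, hTS]; ring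
  -- lam ≥ θ
  have h2sqrt : Real.sqrt 2 * Real.sqrt 2 = 2 := Real.mul_self_sqrt (by norm_num)
  have hab : a * b = 2 * (Real.sqrt S'.card * Real.sqrt T.card) := by
    rw [ha, hb, Real.sqrt_mul (by norm_num : (0:ℝ) ≤ 2),
      Real.sqrt_mul (by norm_num : (0:ℝ) ≤ 2)]
    linear_combination (Real.sqrt S'.card * Real.sqrt T.card) * h2sqrt
  have hcardS' : (S'.card:ℝ) ≤ S.card := by exact_mod_cast Finset.card_le_card hS'sub
  have hsqS' : Real.sqrt S'.card ≤ Real.sqrt S.card := Real.sqrt_le_sqrt hcardS'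
  have habpos : 0 < a * b := mul_pos hapos hbpos
  have hE : θ * (a * b) ≤ 2 * (∑ u ∈ S', ∑ w ∈ T, A u w) := by
    rw [hab]
    have h1 : θ * (Real.sqrt S'.card * Real.sqrt T.card)
        ≤ θ * (Real.sqrt S.card * Real.sqrt T.card) :=
      mul_le_mul_of_nonneg_left
        (mul_le_mul_of_nonneg_right hsqS' (Real.sqrt_nonneg _)) hθ.le
    nlinarith [heS', hdense]
  have hθlam : θ ≤ lam := by
    rw [heq] at hlam1
    have h2 : θ ≤ 2 * (∑ u ∈ S', ∑ w ∈ T, A u w) / (a * b) := by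
      rw [le_div_iff₀ habpos]; linarith
    linarith
  have hlampos : 0 < lam := lt_of_lt_of_le hθ hθlam
  -- mass split
  have hXS : lam * ∑ u ∈ S', φ u ^ 2 = ∑ u ∈ S', ∑ w ∈ T, φ u * (φ w * A w u) := by
    rw [Finset.mul_sum]
    refine Finset.sum_congr rfl fun u hu => ?_
    have he := heig u (by rw [hW]; exact Finset.mem_union_left _ hu)
    calc lam * φ u ^ 2 = φ u * (lam * φ u) := by ring
      _ = φ u * ∑ w ∈ W, φ w * A w u := by rw [he]
      _ = ∑ w ∈ W, φ u * (φ w * A w u) := Finset.mul_sum _ _ _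
      _ = ∑ w ∈ T, φ u * (φ w * A w u) := by
          rw [hW, Finset.sum_union hdST]
          have h0 : ∑ w ∈ S', φ u * (φ w * A w u) = 0 :=
            Finset.sum_eq_zero fun w hw => by rw [hLL w (hS'L hw) u (hS'L hu)]; ring
          rw [h0, zero_add]
  have hXT : lam * ∑ u ∈ T, φ u ^ 2 = ∑ u ∈ T, ∑ w ∈ S', φ u * (φ w * A w u) := by
    rw [Finset.mul_sum]
    refine Finset.sum_congr rfl fun u hu => ?_
    have he := heig u (by rw [hW]; exact Finset.mem_union_right _ hu)
    calc lam * φ u ^ 2 = φ u * (lam * φ u) := by ring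
      _ = φ u * ∑ w ∈ W, φ w * A w u := by rw [he]
      _ = ∑ w ∈ W, φ u * (φ w * A w u) := Finset.mul_sum _ _ _
      _ = ∑ w ∈ S', φ u * (φ w * A w u) := by
          rw [hW, Finset.sum_union hdST]
          have h0 : ∑ w ∈ T, φ u * (φ w * A w u) = 0 :=
            Finset.sum_eq_zero fun w hw => by rw [hRR w (hT hw) u (hT hu)]; ring
          rw [h0, add_zero]
  have hswapST : ∑ u ∈ S', ∑ w ∈ T, φ u * (φ w * A w u)
      = ∑ u ∈ T, ∑ w ∈ S', φ u * (φ w * A w u) := by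
    rw [Finset.sum_comm]
    exact Finset.sum_congr rfl fun x _ => Finset.sum_congr rfl fun y _ => by
      rw [hAsymm x y]; ring
  have hcross : ∑ u ∈ S', φ u ^ 2 = ∑ u ∈ T, φ u ^ 2 := by
    have h0 : lam * ∑ u ∈ S', φ u ^ 2 = lam * ∑ u ∈ T, φ u ^ 2 := by
      rw [hXS, hXT, hswapST]
    exact mul_left_cancel₀ (ne_of_gt hlampos) h0
  have htot : ∑ u ∈ S', φ u ^ 2 + ∑ u ∈ T, φ u ^ 2 = 1 := by
    rw [← Finset.sum_union hdST, ← hφnorm]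
    exact Finset.sum_subset (Finset.subset_univ _)
      (fun u _ hu => by rw [hφsup u (by rwa [hW]), zero_pow two_ne_zero])
  have hmassS : ∑ u ∈ S', φ u ^ 2 = 1/2 := by linarith
  -- pick a heavy vertex
  obtain ⟨v, hvS', hv2⟩ : ∃ v ∈ S', 1 / (2 * (S.card:ℝ)) ≤ φ v ^ 2 := by
    by_contra hcon
    push_neg at hcon
    have hlt2 : ∑ u ∈ S', φ u ^ 2 < ∑ _u ∈ S', 1 / (2 * (S.card:ℝ)) :=
      Finset.sum_lt_sum_of_nonempty hS'ne fun u hu => hcon u hu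
    rw [Finset.sum_const, nsmul_eq_mul, hmassS] at hlt2
    have hle : (S'.card:ℝ) * (1 / (2 * S.card)) ≤ (S.card:ℝ) * (1 / (2 * S.card)) :=
      mul_le_mul_of_nonneg_right hcardS' (by positivity)
    have heq1 : (S.card:ℝ) * (1 / (2 * S.card)) = 1/2 := by
      rw [mul_one_div, div_eq_div_iff (by positivity) (by norm_num : (2:ℝ) ≠ 0)]
      ring
    linarith
  -- v is good
  have hgoodv : good v := by
    refine ⟨φ, hφnn, Real.sqrt_eq_one.mpr hφnorm, ?_, ?_, ?_⟩
    · intro u hu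
      by_contra hmem
      have hnW : u ∉ W := by
        rw [hW, Finset.mem_union]
        rintro (h | h)
        · exact hmem (Finset.mem_union_left _ (hS'sub h))
        · exact hmem (Finset.mem_union_right _ h)
      exact hu (hφsup u hnW)
    · intro u
      have h0 : Matrix.vecMul φ A u = ∑ w, φ w * A w u := by
        simp [Matrix.vecMul, dotProduct]
      by_cases huW : u ∈ W
      · have h1 : ∑ w, φ w * A w u = ∑ w ∈ W, φ w * A w u := by
          symm
          exact Finset.sum_subset (Finset.subset_univ _)
            (fun w _ hw => by rw [hφsup w hw, zero_mul])
        rw [h0, h1, heig u huW]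
        exact mul_le_mul_of_nonneg_right hθlam (hφnn u)
      · rw [hφsup u huW, mul_zero, h0]
        exact Finset.sum_nonneg fun w _ => mul_nonneg (hφnn w) (hnn w u)
    · have h1 : 1 / Real.sqrt (2 * S.card) = Real.sqrt (1 / (2 * S.card)) := by
        rw [one_div, one_div, Real.sqrt_inv]
      rw [h1]
      calc Real.sqrt (1 / (2 * S.card)) ≤ Real.sqrt (φ v ^ 2) := Real.sqrt_le_sqrt hv2
        _ = φ v := Real.sqrt_sq (hφnn v)
  have hbad := (Finset.mem_filter.mp hvS').2
  exact hbad hgoodv
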